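/- Let b < 0 and f(t) = (1/(t−b), 1/(t−b)²)ᵀ for t ∈ [0,∞). Let ξ* be the design assigning mass w₁ = (2−√2)(6−4√2+b²) / (2(b²+12−8√2)) to the point 0 and mass 1−w₁ to the point −√2·b = √2|b|. Then ξ* is E-optimal: for every design η on [0,∞), the smallest eigenvalue of M(η) is at most the smallest eigenvalue of M(ξ*). -/

import Mathlib

open Matrix Finset

structure Design where
  support : Finset ℝ
  weight : ℝ → ℝ
  pos : ∀ t ∈ support, 0 < weight t
  zero : ∀ t ∉ support, weight t = 0
  sum_one : ∑ t ∈ support, weight t = 1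

noncomputable def Design.infoMatrix {m : ℕ} (ξ : Design) (f : ℝ → Fin m → ℝ) :
    Matrix (Fin m) (Fin m) ℝ :=
  ∑ t ∈ ξ.support, ξ.weight t • Matrix.vecMulVec (f t) (f t)

def IsEigenvalue {m : ℕ} (M : Matrix (Fin m) (Fin m) ℝ) (r : ℝ) : Prop :=
  ∃ v : Fin m → ℝ, v ≠ 0 ∧ M.mulVec v = r • v

noncomputable def lambdaMin {m : ℕ} (M : Matrix (Fin m) (Fin m) ℝ) : ℝ :=
  sInf {r | IsEigenvalue M r}

lemma mulVec_two (M : Matrix (Fin 2) (Fin 2) ℝ) (v : Fin 2 → ℝ) (i : Fin 2) :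
    M.mulVec v i = M i 0 * v 0 + M i 1 * v 1 := by
  simp [Matrix.mulVec, dotProduct, Fin.sum_univ_two]

lemma eig_quad {M : Matrix (Fin 2) (Fin 2) ℝ} (hsym : M 1 0 = M 0 1) {r : ℝ}
    (h : IsEigenvalue M r) : (M 0 0 - r) * (M 1 1 - r) = (M 0 1)^2 := by
  obtain ⟨v, hv, hm⟩ := h
  have e0 := congrFun hm 0
  have e1 := congrFun hm 1
  rw [mulVec_two] at e0 e1
  simp only [Pi.smul_apply, smul_eq_mul] at e0 e1
  rw [hsym] at e1
  have hxy : v 0 ≠ 0 ∨ v 1 ≠ 0 := by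
    by_contra hc
    push_neg at hc
    apply hv
    funext i
    fin_cases i
    · exact hc.1
    · exact hc.2
  rcases hxy with hx | hy
  · have h2 : ((M 0 0 - r) * (M 1 1 - r) - (M 0 1)^2) * v 0 = 0 := by
      linear_combination (M 1 1 - r) * e0 - M 0 1 * e1
    rcases mul_eq_zero.1 h2 with h | h
    · linarith
    · exact absurd h hx
  · have h2 : ((M 0 0 - r) * (M 1 1 - r) - (M 0 1)^2) * v 1 = 0 := by
      linear_combination (M 0 0 - r) * e1 - M 0 1 * e0
    rcases mul_eq_zero.1 h2 with h | h
    · linarith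
    · exact absurd h hy

lemma eig_lb {M : Matrix (Fin 2) (Fin 2) ℝ} (hsym : M 1 0 = M 0 1) {r : ℝ}
    (h : IsEigenvalue M r) :
    (M 0 0 + M 1 1 - Real.sqrt ((M 0 0 - M 1 1)^2 + 4*(M 0 1)^2))/2 ≤ r := by
  have hq : (M 0 0 - r) * (M 1 1 - r) = (M 0 1)^2 := eig_quad hsym h
  have hsq : (M 0 0 - M 1 1)^2 + 4*(M 0 1)^2 = (2*r - (M 0 0 + M 1 1))^2 := by
    linear_combination -4 * hq
  rw [hsq, Real.sqrt_sq_eq_abs]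
  have h1 := neg_abs_le (2*r - (M 0 0 + M 1 1))
  linarith

lemma eig_mem_aux (M : Matrix (Fin 2) (Fin 2) ℝ) (hsym : M 1 0 = M 0 1) (lam : ℝ)
    (hprod : (M 0 0 - lam) * (M 1 1 - lam) = (M 0 1)^2) :
    IsEigenvalue M lam := by
  by_cases hc : M 0 1 = 0
  · rw [hc] at hprod
    simp only [ne_eq, OfNat.ofNat_ne_zero, not_false_eq_true, zero_pow] at hprod
    rcases mul_eq_zero.1 hprod with h | h
    · refine ⟨![1, 0], ?_, ?_⟩
      · intro hv; have := congrFun hv 0; simp at this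
      · funext i
        fin_cases i <;>
          simp only [Fin.mk_zero, Fin.mk_one, Fin.isValue, mulVec_two, Matrix.cons_val_zero,
            Matrix.cons_val_one, Matrix.head_cons, Pi.smul_apply, smul_eq_mul] <;>
          rw [hsym] at * <;> rw [hc] <;> ring_nf <;> linarith
    · refine ⟨![0, 1], ?_, ?_⟩
      · intro hv; have := congrFun hv 1; simp at this
      · funext i
        fin_cases i <;>
          simp only [Fin.mk_zero, Fin.mk_one, Fin.isValue, mulVec_two, Matrix.cons_val_zero,
            Matrix.cons_val_one, Matrix.head_cons, Pi.smul_apply, smul_eq_mul] <;>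
          rw [hsym] at * <;> rw [hc] <;> ring_nf <;> linarith
  · refine ⟨![M 0 1, lam - M 0 0], ?_, ?_⟩
    · intro hv; have := congrFun hv 0; simp at this; exact hc this
    · funext i
      fin_cases i <;>
        simp only [Fin.mk_zero, Fin.mk_one, Fin.isValue, mulVec_two, Matrix.cons_val_zero,
          Matrix.cons_val_one, Matrix.head_cons, Pi.smul_apply, smul_eq_mul]
      · ring
      · rw [hsym]; linear_combination -hprod

lemma eig_exists (M : Matrix (Fin 2) (Fin 2) ℝ) (hsym : M 1 0 = M 0 1) :
    IsEigenvalue M ((M 0 0 + M 1 1 - Real.sqrt ((M 0 0 - M 1 1)^2 + 4*(M 0 1)^2))/2) := by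
  apply eig_mem_aux M hsym
  have hR2 : (Real.sqrt ((M 0 0 - M 1 1)^2 + 4*(M 0 1)^2))^2
      = (M 0 0 - M 1 1)^2 + 4*(M 0 1)^2 := Real.sq_sqrt (by positivity)
  linear_combination (1/4 : ℝ) * hR2

lemma lambdaMin_symm (M : Matrix (Fin 2) (Fin 2) ℝ) (hsym : M 1 0 = M 0 1) :
    lambdaMin M = (M 0 0 + M 1 1 - Real.sqrt ((M 0 0 - M 1 1)^2 + 4*(M 0 1)^2))/2 := by
  apply le_antisymm
  · exact csInf_le ⟨_, fun r hr => eig_lb hsym hr⟩ (eig_exists M hsym)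
  · exact le_csInf ⟨_, eig_exists M hsym⟩ (fun r hr => eig_lb hsym hr)

lemma rayleigh_aux (a c d x y lam : ℝ) (ha : 0 ≤ a - lam) (hd : 0 ≤ d - lam)
    (hprod : (a - lam) * (d - lam) = c^2) :
    lam * (x^2 + y^2) ≤ a*x^2 + 2*c*x*y + d*y^2 := by
  rcases eq_or_lt_of_le ha with h0 | h0
  · have hc2 : c^2 = 0 := by rw [← hprod, ← h0]; ring
    have hc : c = 0 := by
      have := sq_nonneg c; nlinarith
    rw [hc]
    nlinarith [mul_nonneg hd (sq_nonneg y)]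
  · nlinarith [sq_nonneg ((a - lam)*x + c*y), mul_nonneg hd (sq_nonneg y)]

lemma rayleigh (a c d x y : ℝ) :
    (a + d - Real.sqrt ((a - d)^2 + 4*c^2))/2 * (x^2 + y^2) ≤
      a*x^2 + 2*c*x*y + d*y^2 := by
  have hD0 : (0:ℝ) ≤ (a - d)^2 + 4*c^2 := by positivity
  have hR2 : (Real.sqrt ((a - d)^2 + 4*c^2))^2 = (a - d)^2 + 4*c^2 := Real.sq_sqrt hD0
  have hR0 : 0 ≤ Real.sqrt ((a - d)^2 + 4*c^2) := Real.sqrt_nonneg _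
  have habs : |a - d| ≤ Real.sqrt ((a - d)^2 + 4*c^2) := by
    calc |a - d| = Real.sqrt ((a-d)^2) := (Real.sqrt_sq_eq_abs _).symm
    _ ≤ _ := Real.sqrt_le_sqrt (by nlinarith [sq_nonneg c])
  have hab := abs_le.1 habs
  apply rayleigh_aux
  · linarith [hab.2]
  · linarith [hab.1]
  · nlinarith [hR2]

lemma sqrt2_facts (s : ℝ) (hs2 : s^2 = 2) (hs0 : 0 < s) :
    280*s < 396 ∧ 311 < 220*s ∧ 38*s < 54 ∧ 2*s < 3 ∧ 1632*s < 2308 ∧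
    1813 < 1282*s ∧ 222*s < 314 ∧ 12*s < 17 ∧ 1 < s := by
  refine ⟨?_, ?_, ?_, ?_, ?_, ?_, ?_, ?_, ?_⟩ <;> nlinarith [hs2, hs0, sq_nonneg (s-1), sq_nonneg (s-2)]

lemma keyineq (s β t : ℝ) (hs2 : s^2 = 2) (hs0 : 0 < s) (hβ : 0 < β) (ht : 0 ≤ t) :
    β^2*(β^2 + 12 - 8*s) *
      (((10*s - 14) + (6 - 4*s)*β^2)*(t + β) + ((2*s - 3)*β + (1 - s)*β^3))^2
    ≤ (17 - 12*s) * (((10*s - 14) + (6 - 4*s)*β^2)^2 + ((2*s - 3)*β + (1 - s)*β^3)^2)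
        * (t + β)^4 := by
  obtain ⟨c1, c2, c3, c4, c5, c6, c7, c8, c9⟩ := sqrt2_facts s hs2 hs0
  have hid : (17 - 12*s) * (((10*s - 14) + (6 - 4*s)*β^2)^2 + ((2*s - 3)*β + (1 - s)*β^3)^2)
        * (t + β)^4
      - β^2*(β^2 + 12 - 8*s) *
        (((10*s - 14) + (6 - 4*s)*β^2)*(t + β) + ((2*s - 3)*β + (1 - s)*β^3))^2
      = t * ((2 - s)*β - (s - 1)*t)^2 *
        (β*((396 - 280*s) + (220*s - 311)*β^2 + (54 - 38*s)*β^4 + (3 - 2*s)*β^6)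
          + (t + β)*((2308 - 1632*s) + (1282*s - 1813)*β^2 + (314 - 222*s)*β^4
              + (17 - 12*s)*β^6)) := by
    linear_combination (68*β^4 + 68*β^6 + -80*β^8 + 16*β^10 + 1600*t*β^3 + -1004*t*β^5 +
      20*t*β^7 + 48*t*β^9 + 1204*t^2*β^2 + -675*t^2*β^4 + -34*t^2*β^6 + 41*t^2*β^8 +
      -696*t^3*β + 718*t^3*β^3 + -208*t^3*β^5 + 10*t^3*β^7 + -512*t^4 + 445*t^4*β^2 +
      -98*t^4*β^4 + -48*s*β^4 + -48*s*β^6 + 56*s*β^8 + -12*s*β^10 + -968*s*t*β^3 +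
      578*s*t*β^5 + 4*s*t*β^7 + -34*s*t*β^9 + -944*s*t^2*β^2 + 546*s*t^2*β^4 +
      6*s*t^2*β^6 + -32*s*t^2*β^8 + 376*s*t^3*β + -418*s*t^3*β^3 + 128*s*t^3*β^5 +
      -10*s*t^3*β^7 + 432*s*t^4 + -370*s*t^4*β^2 + 78*s*t^4*β^4) * hs2
  have hβ2 : 0 ≤ β^2 := sq_nonneg β
  have hβ4 : 0 ≤ β^4 := by positivity
  have hβ6 : 0 ≤ β^6 := by positivity
  have hNL : 0 ≤ (396 - 280*s) + (220*s - 311)*β^2 + (54 - 38*s)*β^4 + (3 - 2*s)*β^6 := by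
    have := mul_nonneg (by linarith : (0:ℝ) ≤ 220*s - 311) hβ2
    have := mul_nonneg (by linarith : (0:ℝ) ≤ 54 - 38*s) hβ4
    have := mul_nonneg (by linarith : (0:ℝ) ≤ 3 - 2*s) hβ6
    linarith
  have hNK : 0 ≤ (2308 - 1632*s) + (1282*s - 1813)*β^2 + (314 - 222*s)*β^4
      + (17 - 12*s)*β^6 := by
    have := mul_nonneg (by linarith : (0:ℝ) ≤ 1282*s - 1813) hβ2
    have := mul_nonneg (by linarith : (0:ℝ) ≤ 314 - 222*s) hβ4
    have := mul_nonneg (by linarith : (0:ℝ) ≤ 17 - 12*s) hβ6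
    linarith
  have hfact : 0 ≤ t * ((2 - s)*β - (s - 1)*t)^2 *
        (β*((396 - 280*s) + (220*s - 311)*β^2 + (54 - 38*s)*β^4 + (3 - 2*s)*β^6)
          + (t + β)*((2308 - 1632*s) + (1282*s - 1813)*β^2 + (314 - 222*s)*β^4
              + (17 - 12*s)*β^6)) := by
    apply mul_nonneg (mul_nonneg ht (sq_nonneg _))
    have h1 := mul_nonneg hβ.le hNL
    have h2 := mul_nonneg (by linarith : (0:ℝ) ≤ t + β) hNK
    linarith
  linarith [hid, hfact]

set_option maxHeartbeats 1000000 in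
/-- for `b < 0` the two-point design with mass
`w₁ = (2−√2)(6−4√2+b²)/(2(b²+12−8√2))` at `0` and mass `1−w₁` at `√2|b|` is
E-optimal for `f(t) = (1/(t−b), 1/(t−b)²)ᵀ` on `[0,∞)`. -/
theorem stmt18 (b : ℝ) (hb : b < 0)
    (f : ℝ → Fin 2 → ℝ) (hf : f = fun t => ![(t - b)⁻¹, ((t - b) ^ 2)⁻¹])
    (w₁ : ℝ)
    (hw₁ : w₁ = (2 - Real.sqrt 2) * (6 - 4 * Real.sqrt 2 + b ^ 2) /
      (2 * (b ^ 2 + 12 - 8 * Real.sqrt 2)))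
    (Mstar : Matrix (Fin 2) (Fin 2) ℝ)
    (hM : Mstar = w₁ • Matrix.vecMulVec (f 0) (f 0) +
      (1 - w₁) • Matrix.vecMulVec (f (-(Real.sqrt 2) * b)) (f (-(Real.sqrt 2) * b))) :
    ∀ η : Design, ↑η.support ⊆ Set.Ici (0 : ℝ) →
      lambdaMin (η.infoMatrix f) ≤ lambdaMin Mstar := by
  intro η hsup
  set s := Real.sqrt 2 with hsdef
  have hs2 : s^2 = 2 := Real.sq_sqrt (by norm_num)
  have hs0 : 0 < s := Real.sqrt_pos.2 (by norm_num)
  obtain ⟨c1, c2, c3, c4, c5, c6, c7, c8, c9⟩ := sqrt2_facts s hs2 hs0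
  have hb0 : b ≠ 0 := ne_of_lt hb
  have hden : 0 < b^2 + 12 - 8*s := by nlinarith [sq_nonneg b]
  have hbsq : 0 < b^2 := by positivity
  have hsb : (0:ℝ) < -s*b - b := by nlinarith
  have hsb0 : -s*b - b ≠ 0 := ne_of_gt hsb
  obtain ⟨v₁, hv1def⟩ : ∃ x : ℝ, x = (10*s - 14) + (6 - 4*s)*b^2 := ⟨_, rfl⟩
  obtain ⟨v₂, hv2def⟩ : ∃ x : ℝ, x = (3 - 2*s)*b + (s - 1)*b^3 := ⟨_, rfl⟩
  obtain ⟨lam, hlamdef⟩ : ∃ x : ℝ, x = (17 - 12*s) / (b^2*(b^2 + 12 - 8*s)) := ⟨_, rfl⟩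
  have hv2neg : v₂ < 0 := by
    rw [hv2def]
    have h1 : (3 - 2*s) + (s - 1)*b^2 > 0 := by nlinarith
    have : (3 - 2*s)*b + (s - 1)*b^3 = b * ((3 - 2*s) + (s - 1)*b^2) := by ring
    rw [this]
    exact mul_neg_of_neg_of_pos hb h1
  have hvsum : 0 < v₁^2 + v₂^2 := by
    have h2 : 0 < v₂^2 := by nlinarith [mul_pos_of_neg_of_neg hv2neg hv2neg]
    nlinarith [sq_nonneg v₁]
  -- entries of Mstar
  have hA : Mstar 0 0 = w₁ * ((-b)⁻¹ * (-b)⁻¹)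
      + (1 - w₁) * ((-s*b - b)⁻¹ * (-s*b - b)⁻¹) := by
    rw [hM]; simp [hf, Matrix.vecMulVec_apply]
  have hC : Mstar 0 1 = w₁ * ((-b)⁻¹ * (((-b))^2)⁻¹)
      + (1 - w₁) * ((-s*b - b)⁻¹ * ((-s*b - b)^2)⁻¹) := by
    rw [hM]; simp [hf, Matrix.vecMulVec_apply]
  have hD : Mstar 1 1 = w₁ * (((-b))^2)⁻¹ * (((-b))^2)⁻¹
      + (1 - w₁) * (((-s*b - b)^2)⁻¹ * ((-s*b - b)^2)⁻¹) := by
    rw [hM]; simp [hf, Matrix.vecMulVec_apply]; ring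
  have hsymM : Mstar 1 0 = Mstar 0 1 := by
    rw [hM]; simp [hf, Matrix.vecMulVec_apply]; ring
  have hnb : (-b) ≠ 0 := by simpa using hb0
  have hdenne : b^2 + 12 - 8*s ≠ 0 := ne_of_gt hden
  -- closed forms of the entries of Mstar
  have hsb0' : -(s * b) - b ≠ 0 := by rwa [neg_mul] at hsb0
  have hPne : (2*b^4*(b^2 + 12 - 8*s)) ≠ 0 :=
    mul_ne_zero (mul_ne_zero two_ne_zero (pow_ne_zero 4 hb0)) hdenne
  have hQne : (b^2*(b^2 + 12 - 8*s)) ≠ 0 := mul_ne_zero (pow_ne_zero 2 hb0) hdenne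
  have hPpos : 0 < 2*b^4*(b^2 + 12 - 8*s) := by positivity
  have hQpos : 0 < b^2*(b^2 + 12 - 8*s) := by positivity
  have hA' : Mstar 0 0 = ((40 - 28*s)*b^2 + (2*s - 2)*b^4) / (2*b^4*(b^2 + 12 - 8*s)) := by
    rw [hA, hw₁]
    have h5 : b ^ 2 + 12 - s * 8 ≠ 0 := by linarith
    have h6 : -s - 1 ≠ 0 := by linarith
    field_simp [hnb, hsb0, hdenne, h5, h6]
    linear_combination ((8) + (-2)*b^2 + (22)*s + (-3)*s*b^2 + (4)*s^2) * hs2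
  have hC' : Mstar 0 1 = ((28 - 20*s)*b + (8*s - 12)*b^3) / (2*b^4*(b^2 + 12 - 8*s)) := by
    rw [hC, hw₁]
    have h5 : b ^ 2 + 12 - s * 8 ≠ 0 := by linarith
    have h6 : -s - 1 ≠ 0 := by linarith
    field_simp [hnb, hsb0, hdenne, h5, h6]
    linear_combination ((-26) + (5)*b^2 + (-42)*s + (11)*s*b^2 + (-22)*s^2 + (7)*s^2*b^2 + (4)*s^3) * hs2
  have hD' : Mstar 1 1 = ((136 - 96*s) + (16*s - 22)*b^2) / (2*b^4*(b^2 + 12 - 8*s)) := by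
    rw [hD, hw₁]
    have h5 : b ^ 2 + 12 - s * 8 ≠ 0 := by linarith
    have h6 : -s - 1 ≠ 0 := by linarith
    field_simp [hnb, hsb0, hdenne, h5, h6]
    linear_combination ((56) + (-12)*b^2 + (208)*s + (-40)*s*b^2 + (236)*s^2 + (-44)*s^2*b^2 + (98)*s^3 + (-17)*s^3*b^2 + (4)*s^4) * hs2
  -- lam is an eigenvalue of Mstar
  have hquadlam : (Mstar 0 0 - lam) * (Mstar 1 1 - lam) = (Mstar 0 1)^2 := by
    rw [hA', hC', hD', hlamdef, div_sub_div _ _ hPne hQne, div_sub_div _ _ hPne hQne,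
      div_mul_div_comm, div_pow, div_eq_div_iff (by positivity) (by positivity)]
    linear_combination ((-1327104)*b^14 + (-3096576)*b^16 + 387072*b^18 + 328704*b^20 +
      49088*b^22 + 2944*b^24 + 64*b^26 + 3538944*s*b^14 + 7962624*s*b^16 +
      (-1695744)*s*b^18 + (-735232)*s*b^20 + (-69632)*s*b^22 + (-2048)*s*b^24 +
      (-3538944)*s^2*b^14 + (-7667712)*s^2*b^16 + 2334720*s^2*b^18 + 540672*s^2*b^20 +
      24576*s^2*b^22 + 1572864*s^3*b^14 + 3276800*s^3*b^16 + (-1310720)*s^3*b^18 +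
      (-131072)*s^3*b^20 + (-262144)*s^4*b^14 + (-524288)*s^4*b^16 + 262144*s^4*b^18) * hs2
  have hEig : IsEigenvalue Mstar lam := eig_mem_aux Mstar hsymM lam hquadlam
  -- trace bound
  have htrace : 2*lam ≤ Mstar 0 0 + Mstar 1 1 := by
    have c10 : 96*s < 136 := by nlinarith [hs2, hs0]
    have c11 : 50 < 36*s := by nlinarith [hs2, hs0]
    have hSd : 0 ≤ (136 - 96*s) + (36*s - 50)*b^2 + (2*s - 2)*b^4 := by
      have h1 := mul_nonneg (by linarith : (0:ℝ) ≤ 36*s - 50) (sq_nonneg b)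
      have h2 := mul_nonneg (by linarith : (0:ℝ) ≤ 2*s - 2) (by positivity : (0:ℝ) ≤ b^4)
      linarith
    rw [hA', hD', hlamdef, ← add_div, mul_div_assoc', div_le_div_iff₀ hQpos hPpos]
    nlinarith [mul_nonneg hSd hQpos.le]
  -- lambdaMin Mstar = lam
  have hlb : ∀ r ∈ {r | IsEigenvalue Mstar r}, lam ≤ r := by
    intro r hr
    have hq := eig_quad hsymM hr
    have hfac : (r - lam) * ((Mstar 0 0 + Mstar 1 1 - lam) - r) = 0 := by
      linear_combination hquadlam - hq
    rcases mul_eq_zero.1 hfac with h | h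
    · linarith
    · linarith
  have hMstarMin : lambdaMin Mstar = lam := by
    apply le_antisymm
    · exact csInf_le ⟨lam, hlb⟩ hEig
    · exact le_csInf ⟨lam, hEig⟩ hlb
  -- the eigenvalue equations for Mstar (not needed further, just the design side now)
  -- η side
  have hNsym : (η.infoMatrix f) 1 0 = (η.infoMatrix f) 0 1 := by
    simp only [Design.infoMatrix, Matrix.sum_apply, Matrix.smul_apply, smul_eq_mul,
      Matrix.vecMulVec_apply]
    exact Finset.sum_congr rfl (fun t ht => by ring)
  have hNA : (η.infoMatrix f) 0 0
      = ∑ t ∈ η.support, η.weight t * ((t - b)⁻¹ * (t - b)⁻¹) := by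
    simp only [Design.infoMatrix, Matrix.sum_apply, Matrix.smul_apply, smul_eq_mul,
      Matrix.vecMulVec_apply, hf, Matrix.cons_val_zero]
  have hNC : (η.infoMatrix f) 0 1
      = ∑ t ∈ η.support, η.weight t * ((t - b)⁻¹ * ((t - b)^2)⁻¹) := by
    simp only [Design.infoMatrix, Matrix.sum_apply, Matrix.smul_apply, smul_eq_mul,
      Matrix.vecMulVec_apply, hf, Matrix.cons_val_zero, Matrix.cons_val_one, Matrix.head_cons]
  have hND : (η.infoMatrix f) 1 1
      = ∑ t ∈ η.support, η.weight t * (((t - b)^2)⁻¹ * ((t - b)^2)⁻¹) := by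
    simp only [Design.infoMatrix, Matrix.sum_apply, Matrix.smul_apply, smul_eq_mul,
      Matrix.vecMulVec_apply, hf, Matrix.cons_val_one, Matrix.head_cons, Matrix.cons_val_zero]
  -- pointwise bound
  have hpoint : ∀ t : ℝ, 0 ≤ t →
      (v₁*(t - b)⁻¹ + v₂*((t - b)^2)⁻¹)^2 ≤ lam*(v₁^2 + v₂^2) := by
    intro t ht0
    have htb : 0 < t - b := by linarith
    have htb0 : t - b ≠ 0 := ne_of_gt htb
    have key2 : b^2*(b^2 + 12 - 8*s)*(v₁*(t - b) + v₂)^2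
        ≤ (17 - 12*s)*(v₁^2 + v₂^2)*(t - b)^4 := by
      have h := keyineq s (-b) t hs2 hs0 (by linarith : (0:ℝ) < -b) ht0
      calc b^2*(b^2 + 12 - 8*s)*(v₁*(t - b) + v₂)^2
          = (-b)^2*((-b)^2 + 12 - 8*s) *
            (((10*s - 14) + (6 - 4*s)*(-b)^2)*(t + (-b)) + ((2*s - 3)*(-b) + (1 - s)*(-b)^3))^2 := by
            rw [hv1def, hv2def]; ring
        _ ≤ (17 - 12*s) * (((10*s - 14) + (6 - 4*s)*(-b)^2)^2 + ((2*s - 3)*(-b) + (1 - s)*(-b)^3)^2)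
              * (t + (-b))^4 := h
        _ = (17 - 12*s)*(v₁^2 + v₂^2)*(t - b)^4 := by rw [hv1def, hv2def]; ring
    have efrac : (v₁*(t - b)⁻¹ + v₂*((t - b)^2)⁻¹)^2 = (v₁*(t - b) + v₂)^2 / (t - b)^4 := by
      rw [eq_div_iff (by positivity)]
      field_simp
    rw [efrac, hlamdef, div_mul_eq_mul_div, div_le_div_iff₀ (by positivity) hQpos]
    linarith [key2]
  -- sum bound
  have hsum : (η.infoMatrix f) 0 0 * v₁^2 + 2*((η.infoMatrix f) 0 1)*v₁*v₂
      + (η.infoMatrix f) 1 1 * v₂^2 ≤ lam*(v₁^2 + v₂^2) := by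
    have expand : (η.infoMatrix f) 0 0 * v₁^2 + 2*((η.infoMatrix f) 0 1)*v₁*v₂
        + (η.infoMatrix f) 1 1 * v₂^2
        = ∑ t ∈ η.support, η.weight t * (v₁*(t - b)⁻¹ + v₂*((t - b)^2)⁻¹)^2 := by
      rw [hNA, hNC, hND]
      simp only [Finset.sum_mul, Finset.mul_sum]
      rw [← Finset.sum_add_distrib, ← Finset.sum_add_distrib]
      exact Finset.sum_congr rfl (fun t ht => by ring)
    rw [expand]
    calc ∑ t ∈ η.support, η.weight t * (v₁*(t - b)⁻¹ + v₂*((t - b)^2)⁻¹)^2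
        ≤ ∑ t ∈ η.support, η.weight t * (lam*(v₁^2 + v₂^2)) := by
          apply Finset.sum_le_sum
          intro t ht
          exact mul_le_mul_of_nonneg_left (hpoint t (hsup ht)) (η.pos t ht).le
      _ = lam*(v₁^2 + v₂^2) := by rw [← Finset.sum_mul, η.sum_one, one_mul]
  -- conclude
  rw [hMstarMin, lambdaMin_symm (η.infoMatrix f) hNsym]
  have hray := rayleigh ((η.infoMatrix f) 0 0) ((η.infoMatrix f) 0 1)
    ((η.infoMatrix f) 1 1) v₁ v₂
  have := le_trans hray hsum
  exact le_of_mul_le_mul_right this hvsum
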